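/- Let n ≥ 6 and let i ≥ 4 be integers. Then the number of accurate dominating sets of the path P_n of cardinality i satisfies d_a(P_n, i) + d(P_{n−6}, i−4) ≥ 2·d(P_{n−3}, i−2), where P_0 is the empty graph (whose unique dominating set is the empty set). -/

import Mathlib

/-- `D` is a dominating set of the simple graph `G`: every vertex not in `D`
is adjacent to at least one vertex in `D`. -/
def IsDomSet {V : Type*} (G : SimpleGraph V) (D : Finset V) : Prop :=
  ∀ v : V, v ∉ D → ∃ u ∈ D, G.Adj u v

/-- `D` is an accurate dominating set of `G`: a dominating set such that no subset of
`V \ D` of cardinality `|D|` is a dominating set of `G`. -/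
def IsAccDomSet {V : Type*} (G : SimpleGraph V) (D : Finset V) : Prop :=
  IsDomSet G D ∧
    ∀ E : Finset V, (∀ v ∈ E, v ∉ D) → E.card = D.card → ¬ IsDomSet G E

/-- The domination number of `G`: the minimum cardinality of a dominating set. -/
noncomputable def domNum {V : Type*} (G : SimpleGraph V) : ℕ :=
  sInf {k | ∃ D : Finset V, IsDomSet G D ∧ D.card = k}

/-- The accurate domination number of `G`: the minimum cardinality of an accurate
dominating set. -/
noncomputable def accDomNum {V : Type*} (G : SimpleGraph V) : ℕ :=
  sInf {k | ∃ D : Finset V, IsAccDomSet G D ∧ D.card = k}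

/-- `d(G,i)`: the number of dominating sets of `G` of cardinality `i`. -/
noncomputable def numDomSets {V : Type*} (G : SimpleGraph V) (i : ℕ) : ℕ :=
  Set.ncard {D : Finset V | IsDomSet G D ∧ D.card = i}

/-- `d_a(G,i)`: the number of accurate dominating sets of `G` of cardinality `i`. -/
noncomputable def numAccDomSets {V : Type*} (G : SimpleGraph V) (i : ℕ) : ℕ :=
  Set.ncard {D : Finset V | IsAccDomSet G D ∧ D.card = i}

namespace PathAcc

open SimpleGraph

def emb1 (n : ℕ) : Fin (n - 3) ↪ Fin n :=
  ⟨fun x => ⟨x.val + 3, by have := x.isLt; omega⟩, fun a b h => by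
    apply Fin.ext
    have := congrArg Fin.val h
    simpa using this⟩

def emb2 (n : ℕ) : Fin (n - 3) ↪ Fin n :=
  ⟨fun x => ⟨x.val, by have := x.isLt; omega⟩, fun a b h => by
    apply Fin.ext
    have := congrArg Fin.val h
    simpa using this⟩

variable {n : ℕ}

def phi1 (hn : 6 ≤ n) (S : Finset (Fin (n - 3))) : Finset (Fin n) :=
  insert ⟨0, by omega⟩ (insert ⟨1, by omega⟩ (S.map (emb1 n)))

def phi2 (hn : 6 ≤ n) (S : Finset (Fin (n - 3))) : Finset (Fin n) :=
  insert ⟨n - 2, by omega⟩ (insert ⟨n - 1, by omega⟩ (S.map (emb2 n)))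

lemma mem_phi1 {hn : 6 ≤ n} {S : Finset (Fin (n - 3))} {v : Fin n} :
    v ∈ phi1 hn S ↔ v.val = 0 ∨ v.val = 1 ∨ ∃ x ∈ S, v.val = x.val + 3 := by
  simp only [phi1, Finset.mem_insert, Finset.mem_map, emb1,
    Function.Embedding.coeFn_mk, Fin.ext_iff]
  constructor
  · rintro (h | h | ⟨x, hx, hxv⟩)
    · exact Or.inl h
    · exact Or.inr (Or.inl h)
    · exact Or.inr (Or.inr ⟨x, hx, hxv.symm⟩)
  · rintro (h | h | ⟨x, hx, hxv⟩)
    · exact Or.inl h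
    · exact Or.inr (Or.inl h)
    · exact Or.inr (Or.inr ⟨x, hx, hxv.symm⟩)

lemma mem_phi2 {hn : 6 ≤ n} {S : Finset (Fin (n - 3))} {v : Fin n} :
    v ∈ phi2 hn S ↔ v.val = n - 2 ∨ v.val = n - 1 ∨ ∃ x ∈ S, v.val = x.val := by
  simp only [phi2, Finset.mem_insert, Finset.mem_map, emb2,
    Function.Embedding.coeFn_mk, Fin.ext_iff]
  constructor
  · rintro (h | h | ⟨x, hx, hxv⟩)
    · exact Or.inl h
    · exact Or.inr (Or.inl h)
    · exact Or.inr (Or.inr ⟨x, hx, hxv.symm⟩)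
  · rintro (h | h | ⟨x, hx, hxv⟩)
    · exact Or.inl h
    · exact Or.inr (Or.inl h)
    · exact Or.inr (Or.inr ⟨x, hx, hxv.symm⟩)

lemma phi1_card (hn : 6 ≤ n) (S : Finset (Fin (n - 3))) :
    (phi1 hn S).card = S.card + 2 := by
  rw [phi1, Finset.card_insert_of_notMem, Finset.card_insert_of_notMem,
    Finset.card_map]
  · simp only [Finset.mem_map, emb1, Function.Embedding.coeFn_mk, Fin.ext_iff]
    rintro ⟨x, hx, h⟩
    have h' : x.val + 3 = 1 := h
    omega
  · simp only [Finset.mem_insert, Finset.mem_map, emb1,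
      Function.Embedding.coeFn_mk, Fin.ext_iff]
    rintro (h | ⟨x, hx, h⟩) <;> simp at h

lemma phi2_card (hn : 6 ≤ n) (S : Finset (Fin (n - 3))) :
    (phi2 hn S).card = S.card + 2 := by
  rw [phi2, Finset.card_insert_of_notMem, Finset.card_insert_of_notMem,
    Finset.card_map]
  · simp only [Finset.mem_map, emb2, Function.Embedding.coeFn_mk, Fin.ext_iff]
    rintro ⟨x, hx, h⟩
    have h' : x.val = n - 1 := h
    have := x.isLt
    omega
  · simp only [Finset.mem_insert, Finset.mem_map, emb2,
      Function.Embedding.coeFn_mk, Fin.ext_iff]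
    rintro (h | ⟨x, hx, h⟩)
    · omega
    · have h' : x.val = n - 2 := h; have := x.isLt; omega

lemma phi1_inj (hn : 6 ≤ n) {S T : Finset (Fin (n - 3))}
    (h : phi1 hn S = phi1 hn T) : S = T := by
  ext x
  have hx : emb1 n x ∈ phi1 hn S ↔ emb1 n x ∈ phi1 hn T := by rw [h]
  rw [mem_phi1, mem_phi1] at hx
  have hval : (emb1 n x).val = x.val + 3 := rfl
  constructor
  · intro hxS
    rcases hx.mp (Or.inr (Or.inr ⟨x, hxS, rfl⟩)) with h0 | h1 | ⟨y, hy, hxy⟩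
    · omega
    · omega
    · have : x = y := Fin.ext (by omega)
      exact this ▸ hy
  · intro hxT
    rcases hx.mpr (Or.inr (Or.inr ⟨x, hxT, rfl⟩)) with h0 | h1 | ⟨y, hy, hxy⟩
    · omega
    · omega
    · have : x = y := Fin.ext (by omega)
      exact this ▸ hy

lemma phi2_inj (hn : 6 ≤ n) {S T : Finset (Fin (n - 3))}
    (h : phi2 hn S = phi2 hn T) : S = T := by
  ext x
  have hx : emb2 n x ∈ phi2 hn S ↔ emb2 n x ∈ phi2 hn T := by rw [h]
  rw [mem_phi2, mem_phi2] at hx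
  have hval : (emb2 n x).val = x.val := rfl
  have hlt := x.isLt
  constructor
  · intro hxS
    rcases hx.mp (Or.inr (Or.inr ⟨x, hxS, rfl⟩)) with h0 | h1 | ⟨y, hy, hxy⟩
    · omega
    · omega
    · have : x = y := Fin.ext (by omega)
      exact this ▸ hy
  · intro hxT
    rcases hx.mpr (Or.inr (Or.inr ⟨x, hxT, rfl⟩)) with h0 | h1 | ⟨y, hy, hxy⟩
    · omega
    · omega
    · have : x = y := Fin.ext (by omega)
      exact this ▸ hy

lemma phi1_dom (hn : 6 ≤ n) {S : Finset (Fin (n - 3))}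
    (hS : IsDomSet (pathGraph (n - 3)) S) : IsDomSet (pathGraph n) (phi1 hn S) := by
  intro v hv
  have hvlt := v.isLt
  rcases lt_or_ge v.val 3 with h3 | h3
  · have hv0 : v.val ≠ 0 := fun h => hv (mem_phi1.mpr (Or.inl h))
    have hv1 : v.val ≠ 1 := fun h => hv (mem_phi1.mpr (Or.inr (Or.inl h)))
    refine ⟨⟨1, by omega⟩, mem_phi1.mpr (Or.inr (Or.inl rfl)), ?_⟩
    rw [SimpleGraph.pathGraph_adj]
    simp only []
    omega
  · have hwlt : v.val - 3 < n - 3 := by omega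
    set w : Fin (n - 3) := ⟨v.val - 3, hwlt⟩ with hw
    have hwS : w ∉ S := by
      intro hmem
      exact hv (mem_phi1.mpr (Or.inr (Or.inr ⟨w, hmem, by simp [hw]; omega⟩)))
    obtain ⟨u, hu, hadj⟩ := hS w hwS
    rw [SimpleGraph.pathGraph_adj] at hadj
    refine ⟨emb1 n u, mem_phi1.mpr (Or.inr (Or.inr ⟨u, hu, rfl⟩)), ?_⟩
    rw [SimpleGraph.pathGraph_adj]
    have h1 : (emb1 n u).val = u.val + 3 := rfl
    have h2 : w.val = v.val - 3 := rfl
    omega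

lemma phi2_dom (hn : 6 ≤ n) {S : Finset (Fin (n - 3))}
    (hS : IsDomSet (pathGraph (n - 3)) S) : IsDomSet (pathGraph n) (phi2 hn S) := by
  intro v hv
  have hvlt := v.isLt
  rcases lt_or_ge v.val (n - 3) with h3 | h3
  · set w : Fin (n - 3) := ⟨v.val, h3⟩ with hw
    have hwS : w ∉ S := by
      intro hmem
      exact hv (mem_phi2.mpr (Or.inr (Or.inr ⟨w, hmem, rfl⟩)))
    obtain ⟨u, hu, hadj⟩ := hS w hwS
    rw [SimpleGraph.pathGraph_adj] at hadj
    refine ⟨emb2 n u, mem_phi2.mpr (Or.inr (Or.inr ⟨u, hu, rfl⟩)), ?_⟩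
    rw [SimpleGraph.pathGraph_adj]
    have h1 : (emb2 n u).val = u.val := rfl
    have h2 : w.val = v.val := rfl
    omega
  · have hv2 : v.val ≠ n - 2 := fun h => hv (mem_phi2.mpr (Or.inl h))
    have hv1 : v.val ≠ n - 1 := fun h => hv (mem_phi2.mpr (Or.inr (Or.inl h)))
    have hv3 : v.val = n - 3 := by omega
    refine ⟨⟨n - 2, by omega⟩, mem_phi2.mpr (Or.inl rfl), ?_⟩
    rw [SimpleGraph.pathGraph_adj]
    simp only []
    omega

lemma acc_left (hn : 6 ≤ n) {D : Finset (Fin n)}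
    (hD : IsDomSet (pathGraph n) D)
    (h0 : (⟨0, by omega⟩ : Fin n) ∈ D) (h1 : (⟨1, by omega⟩ : Fin n) ∈ D) :
    IsAccDomSet (pathGraph n) D := by
  refine ⟨hD, fun E hE hcard hEdom => ?_⟩
  by_cases h : (⟨0, by omega⟩ : Fin n) ∈ E
  · exact hE _ h h0
  · obtain ⟨u, hu, hadj⟩ := hEdom _ h
    rw [SimpleGraph.pathGraph_adj] at hadj
    have hu1 : u = (⟨1, by omega⟩ : Fin n) := by
      apply Fin.ext
      simp only [] at hadj ⊢
      omega
    exact hE u hu (hu1 ▸ h1)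

lemma acc_right (hn : 6 ≤ n) {D : Finset (Fin n)}
    (hD : IsDomSet (pathGraph n) D)
    (h0 : (⟨n - 1, by omega⟩ : Fin n) ∈ D) (h1 : (⟨n - 2, by omega⟩ : Fin n) ∈ D) :
    IsAccDomSet (pathGraph n) D := by
  refine ⟨hD, fun E hE hcard hEdom => ?_⟩
  by_cases h : (⟨n - 1, by omega⟩ : Fin n) ∈ E
  · exact hE _ h h0
  · obtain ⟨u, hu, hadj⟩ := hEdom _ h
    rw [SimpleGraph.pathGraph_adj] at hadj
    have hulr := u.isLt
    have hu1 : u = (⟨n - 2, by omega⟩ : Fin n) := by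
      apply Fin.ext
      simp only [] at hadj ⊢
      omega
    exact hE u hu (hu1 ▸ h1)

def psi (n : ℕ) (D : Finset (Fin n)) : Finset (Fin (n - 6)) :=
  (D.filter (fun x => 3 ≤ x.val ∧ x.val + 4 ≤ n)).attach.map
    ⟨fun x => ⟨x.1.val - 3, by
        have h := (Finset.mem_filter.mp x.2).2
        omega⟩,
     fun a b h => by
        have ha := (Finset.mem_filter.mp a.2).2
        have hb := (Finset.mem_filter.mp b.2).2
        have hv := congrArg Fin.val h
        simp only [] at hv
        apply Subtype.ext
        apply Fin.ext
        omega⟩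

lemma mem_psi {D : Finset (Fin n)} {w : Fin (n - 6)} :
    w ∈ psi n D ↔ ∃ v ∈ D, v.val = w.val + 3 := by
  have hwlt := w.isLt
  simp only [psi, Finset.mem_map, Finset.mem_attach, true_and, Subtype.exists,
    Function.Embedding.coeFn_mk, Finset.mem_filter]
  constructor
  · rintro ⟨v, ⟨hvD, h3, h4⟩, hw⟩
    have := congrArg Fin.val hw
    have this' : v.val - 3 = w.val := this
    exact ⟨v, hvD, by omega⟩
  · rintro ⟨v, hvD, hv⟩
    refine ⟨v, ⟨hvD, by omega, by omega⟩, ?_⟩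
    apply Fin.ext
    show v.val - 3 = w.val
    omega

lemma psi_dom (hn : 6 ≤ n) {D : Finset (Fin n)}
    (hdom : IsDomSet (pathGraph n) D)
    (hno2 : ∀ v ∈ D, v.val ≠ 2) (hno3 : ∀ v ∈ D, v.val ≠ n - 3) :
    IsDomSet (pathGraph (n - 6)) (psi n D) := by
  intro w hw
  have hbd := w.isLt
  have hvD : (⟨w.val + 3, by omega⟩ : Fin n) ∉ D := by
    intro hmem
    exact hw (mem_psi.mpr ⟨_, hmem, rfl⟩)
  obtain ⟨u, hu, hadj⟩ := hdom _ hvD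
  rw [SimpleGraph.pathGraph_adj] at hadj
  have hadj' : u.val + 1 = w.val + 3 ∨ w.val + 3 + 1 = u.val := hadj
  have h2 := hno2 u hu
  have h3 := hno3 u hu
  have hun := u.isLt
  refine ⟨⟨u.val - 3, by omega⟩, mem_psi.mpr ⟨u, hu, by
    show u.val = u.val - 3 + 3
    omega⟩, ?_⟩
  rw [SimpleGraph.pathGraph_adj]
  show u.val - 3 + 1 = w.val ∨ w.val + 1 = u.val - 3
  omega

lemma psi_card (hn : 6 ≤ n) {D : Finset (Fin n)}
    (h0 : (⟨0, by omega⟩ : Fin n) ∈ D) (h1 : (⟨1, by omega⟩ : Fin n) ∈ D)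
    (h2 : (⟨n - 2, by omega⟩ : Fin n) ∈ D) (h3 : (⟨n - 1, by omega⟩ : Fin n) ∈ D)
    (hall : ∀ v ∈ D, v.val ≤ 1 ∨ (3 ≤ v.val ∧ v.val + 4 ≤ n) ∨ n - 2 ≤ v.val) :
    (psi n D).card + 4 = D.card := by
  classical
  have hpsicard : (psi n D).card = (D.filter (fun x => 3 ≤ x.val ∧ x.val + 4 ≤ n)).card := by
    rw [psi, Finset.card_map, Finset.card_attach]
  have hsplit := Finset.card_filter_add_card_filter_not
    (s := D) (p := fun x : Fin n => 3 ≤ x.val ∧ x.val + 4 ≤ n)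
  have hneg : D.filter (fun x : Fin n => ¬ (3 ≤ x.val ∧ x.val + 4 ≤ n)) =
      {⟨0, by omega⟩, ⟨1, by omega⟩, ⟨n - 2, by omega⟩, ⟨n - 1, by omega⟩} := by
    ext v
    have hvlt := v.isLt
    simp only [Finset.mem_filter, Finset.mem_insert, Finset.mem_singleton, Fin.ext_iff]
    constructor
    · rintro ⟨hvD, hnp⟩
      have := hall v hvD
      omega
    · intro hv
      rcases hv with h | h | h | h
      · exact ⟨by have : v = ⟨0, by omega⟩ := Fin.ext h; rw [this]; exact h0, by omega⟩
      · exact ⟨by have : v = ⟨1, by omega⟩ := Fin.ext h; rw [this]; exact h1, by omega⟩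
      · exact ⟨by have : v = ⟨n - 2, by omega⟩ := Fin.ext h; rw [this]; exact h2, by omega⟩
      · exact ⟨by have : v = ⟨n - 1, by omega⟩ := Fin.ext h; rw [this]; exact h3, by omega⟩
  have hfour : ({⟨0, by omega⟩, ⟨1, by omega⟩, ⟨n - 2, by omega⟩, ⟨n - 1, by omega⟩} :
      Finset (Fin n)).card = 4 := by
    rw [Finset.card_insert_of_notMem, Finset.card_insert_of_notMem,
      Finset.card_insert_of_notMem, Finset.card_singleton]
    · simp only [Finset.mem_singleton, Fin.ext_iff]; omega
    · simp only [Finset.mem_insert, Finset.mem_singleton, Fin.ext_iff]; omega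
    · simp only [Finset.mem_insert, Finset.mem_singleton, Fin.ext_iff]
      push_neg
      refine ⟨by omega, by omega, by omega⟩
  rw [hpsicard]
  rw [hneg, hfour] at hsplit
  omega

lemma mem_iff_psi (hn : 6 ≤ n) {D : Finset (Fin n)} {v : Fin n}
    (h3 : 3 ≤ v.val) (h4 : v.val + 4 ≤ n) :
    v ∈ D ↔ (⟨v.val - 3, by omega⟩ : Fin (n - 6)) ∈ psi n D := by
  rw [mem_psi]
  constructor
  · intro hv
    exact ⟨v, hv, by simp only []; omega⟩
  · rintro ⟨u, hu, huv⟩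
    simp only [] at huv
    have : u = v := Fin.ext (by omega)
    exact this ▸ hu

lemma eq_of_psi_eq (hn : 6 ≤ n) {D D' : Finset (Fin n)}
    (hallD : ∀ v ∈ D, v.val ≤ 1 ∨ (3 ≤ v.val ∧ v.val + 4 ≤ n) ∨ n - 2 ≤ v.val)
    (hallD' : ∀ v ∈ D', v.val ≤ 1 ∨ (3 ≤ v.val ∧ v.val + 4 ≤ n) ∨ n - 2 ≤ v.val)
    (hD : (⟨0, by omega⟩ : Fin n) ∈ D ∧ (⟨1, by omega⟩ : Fin n) ∈ D ∧
      (⟨n - 2, by omega⟩ : Fin n) ∈ D ∧ (⟨n - 1, by omega⟩ : Fin n) ∈ D)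
    (hD' : (⟨0, by omega⟩ : Fin n) ∈ D' ∧ (⟨1, by omega⟩ : Fin n) ∈ D' ∧
      (⟨n - 2, by omega⟩ : Fin n) ∈ D' ∧ (⟨n - 1, by omega⟩ : Fin n) ∈ D')
    (h : psi n D = psi n D') : D = D' := by
  ext v
  have hvlt := v.isLt
  by_cases hm : 3 ≤ v.val ∧ v.val + 4 ≤ n
  · rw [mem_iff_psi hn hm.1 hm.2, mem_iff_psi hn hm.1 hm.2, h]
  · obtain ⟨a, b, c, d⟩ := hD
    obtain ⟨a', b', c', d'⟩ := hD'
    constructor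
    · intro hv
      have h4 : v.val = 0 ∨ v.val = 1 ∨ v.val = n - 2 ∨ v.val = n - 1 := by
        have := hallD v hv; omega
      rcases h4 with h | h | h | h
      · have : v = (⟨0, by omega⟩ : Fin n) := Fin.ext h; rw [this]; exact a'
      · have : v = (⟨1, by omega⟩ : Fin n) := Fin.ext h; rw [this]; exact b'
      · have : v = (⟨n - 2, by omega⟩ : Fin n) := Fin.ext h; rw [this]; exact c'
      · have : v = (⟨n - 1, by omega⟩ : Fin n) := Fin.ext h; rw [this]; exact d'
    · intro hv
      have h4 : v.val = 0 ∨ v.val = 1 ∨ v.val = n - 2 ∨ v.val = n - 1 := by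
        have := hallD' v hv; omega
      rcases h4 with h | h | h | h
      · have : v = (⟨0, by omega⟩ : Fin n) := Fin.ext h; rw [this]; exact a
      · have : v = (⟨1, by omega⟩ : Fin n) := Fin.ext h; rw [this]; exact b
      · have : v = (⟨n - 2, by omega⟩ : Fin n) := Fin.ext h; rw [this]; exact c
      · have : v = (⟨n - 1, by omega⟩ : Fin n) := Fin.ext h; rw [this]; exact d

lemma inter_facts (hn : 6 ≤ n) {S₁ S₂ : Finset (Fin (n - 3))} {D : Finset (Fin n)}
    (hD1 : D = phi1 hn S₁) (hD2 : D = phi2 hn S₂) :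
    ((⟨0, by omega⟩ : Fin n) ∈ D ∧ (⟨1, by omega⟩ : Fin n) ∈ D ∧
      (⟨n - 2, by omega⟩ : Fin n) ∈ D ∧ (⟨n - 1, by omega⟩ : Fin n) ∈ D) ∧
    (∀ v ∈ D, v.val ≤ 1 ∨ (3 ≤ v.val ∧ v.val + 4 ≤ n) ∨ n - 2 ≤ v.val) ∧
    (∀ v ∈ D, v.val ≠ 2) ∧ (∀ v ∈ D, v.val ≠ n - 3) := by
  refine ⟨⟨?_, ?_, ?_, ?_⟩, ?_, ?_, ?_⟩
  · rw [hD1]; exact mem_phi1.mpr (Or.inl rfl)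
  · rw [hD1]; exact mem_phi1.mpr (Or.inr (Or.inl rfl))
  · rw [hD2]; exact mem_phi2.mpr (Or.inl rfl)
  · rw [hD2]; exact mem_phi2.mpr (Or.inr (Or.inl rfl))
  · intro v hv
    have h1 := mem_phi1.mp (hD1 ▸ hv)
    have h2 := mem_phi2.mp (hD2 ▸ hv)
    rcases h1 with h1 | h1 | ⟨x, hx, h1⟩ <;>
      rcases h2 with h2 | h2 | ⟨y, hy, h2⟩ <;>
      first
        | omega
        | (have := y.isLt; omega)
  · intro v hv
    have h1 := mem_phi1.mp (hD1 ▸ hv)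
    rcases h1 with h1 | h1 | ⟨x, hx, h1⟩ <;> omega
  · intro v hv
    have h2 := mem_phi2.mp (hD2 ▸ hv)
    rcases h2 with h2 | h2 | ⟨y, hy, h2⟩ <;>
      first
        | omega
        | (have := y.isLt; omega)

end PathAcc

/-- For `n ≥ 6` and `i ≥ 4`,
`d_a(P_n, i) + d(P_{n-6}, i-4) ≥ 2 * d(P_{n-3}, i-2)`. -/
theorem path_numAccDomSets_lower2 (n i : ℕ) (hn : 6 ≤ n) (hi : 4 ≤ i) :
    2 * numDomSets (SimpleGraph.pathGraph (n - 3)) (i - 2) ≤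
      numAccDomSets (SimpleGraph.pathGraph n) i +
        numDomSets (SimpleGraph.pathGraph (n - 6)) (i - 4) := by
  classical
  set X : Set (Finset (Fin (n - 3))) :=
    {S | IsDomSet (SimpleGraph.pathGraph (n - 3)) S ∧ S.card = i - 2} with hXdef
  set A : Set (Finset (Fin n)) := PathAcc.phi1 hn '' X with hAdef
  set B : Set (Finset (Fin n)) := PathAcc.phi2 hn '' X with hBdef
  have hAcard : A.ncard = X.ncard :=
    Set.ncard_image_of_injOn (fun S _ T _ h => PathAcc.phi1_inj hn h)
  have hBcard : B.ncard = X.ncard :=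
    Set.ncard_image_of_injOn (fun S _ T _ h => PathAcc.phi2_inj hn h)
  have hsub : A ∪ B ⊆
      {D : Finset (Fin n) | IsAccDomSet (SimpleGraph.pathGraph n) D ∧ D.card = i} := by
    rintro D (⟨S, ⟨hSdom, hScard⟩, rfl⟩ | ⟨S, ⟨hSdom, hScard⟩, rfl⟩)
    · refine ⟨PathAcc.acc_left hn (PathAcc.phi1_dom hn hSdom)
        (PathAcc.mem_phi1.mpr (Or.inl rfl)) (PathAcc.mem_phi1.mpr (Or.inr (Or.inl rfl))), ?_⟩
      rw [PathAcc.phi1_card hn S, hScard]; omega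
    · refine ⟨PathAcc.acc_right hn (PathAcc.phi2_dom hn hSdom)
        (PathAcc.mem_phi2.mpr (Or.inr (Or.inl rfl))) (PathAcc.mem_phi2.mpr (Or.inl rfl)), ?_⟩
      rw [PathAcc.phi2_card hn S, hScard]; omega
  have hUnion : (A ∪ B).ncard ≤ numAccDomSets (SimpleGraph.pathGraph n) i :=
    Set.ncard_le_ncard hsub (Set.toFinite _)
  have hInterSub : PathAcc.psi n '' (A ∩ B) ⊆
      {D : Finset (Fin (n - 6)) |
        IsDomSet (SimpleGraph.pathGraph (n - 6)) D ∧ D.card = i - 4} := by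
    rintro E ⟨D, ⟨⟨S₁, hS₁, hD1⟩, ⟨S₂, hS₂, hD2⟩⟩, rfl⟩
    obtain ⟨⟨a, b, c, d⟩, hall, hno2, hno3⟩ := PathAcc.inter_facts hn hD1.symm hD2.symm
    have hdom : IsDomSet (SimpleGraph.pathGraph n) D := hD1 ▸ PathAcc.phi1_dom hn hS₁.1
    refine ⟨PathAcc.psi_dom hn hdom hno2 hno3, ?_⟩
    have hc := PathAcc.psi_card hn a b c d hall
    have hDcard : D.card = i := by
      rw [← hD1, PathAcc.phi1_card hn S₁, hS₁.2]; omega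
    omega
  have hinj : Set.InjOn (PathAcc.psi n) (A ∩ B) := by
    rintro D ⟨⟨S₁, hS₁, hD1⟩, ⟨S₂, hS₂, hD2⟩⟩ D' ⟨⟨T₁, hT₁, hE1⟩, ⟨T₂, hT₂, hE2⟩⟩ h
    obtain ⟨hDmem, hallD, _, _⟩ := PathAcc.inter_facts hn hD1.symm hD2.symm
    obtain ⟨hD'mem, hallD', _, _⟩ := PathAcc.inter_facts hn hE1.symm hE2.symm
    exact PathAcc.eq_of_psi_eq hn hallD hallD' hDmem hD'mem h
  have hInter : (A ∩ B).ncard ≤ numDomSets (SimpleGraph.pathGraph (n - 6)) (i - 4) := by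
    calc (A ∩ B).ncard = (PathAcc.psi n '' (A ∩ B)).ncard :=
          (Set.ncard_image_of_injOn hinj).symm
      _ ≤ _ := Set.ncard_le_ncard hInterSub (Set.toFinite _)
  have hkey := Set.ncard_union_add_ncard_inter A B (Set.toFinite _) (Set.toFinite _)
  have hXeq : numDomSets (SimpleGraph.pathGraph (n - 3)) (i - 2) = X.ncard := rfl
  omega
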